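/- In a discrete-time frictionless market on Ω^T with price process S and a family 𝒬^T of priors closed under concatenation with selectors of the one-step prior sets, assume the no-arbitrage condition NA(𝒬^T): V_T^{0,φ} ≥ 0 𝒬^T-q.s. implies V_T^{0,φ} = 0 𝒬^T-q.s. for every strategy φ. If φ is a strategy with V_T^{x,φ} ≥ 0 𝒬^T-quasi-surely for some x ≥ 0, then V_t^{x,φ} ≥ 0 𝒬^t-quasi-surely for every t ∈ {0,…,T}. -/

import Mathlib

open Set MeasureTheory

/-- Restriction of a path of length `t` to its first `s` coordinates. -/
def restr {X : Type*} {s t : ℕ} (h : s ≤ t) (ω : Fin t → X) : Fin s → X :=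
  fun i => ω (Fin.castLE h i)

/-- Value at time `t` of the self-financing portfolio with initial capital `x` and
strategy `φ` (where `φ s`, decided at time `s`, is the holding over the period
`(s, s+1]`), for the `d`-dimensional price process `S`:
`V_t^{x,φ}(ω^t) = x + ∑_{s=0}^{t-1} φ_{s+1}(ω^s) ⬝ (S_{s+1}(ω^{s+1}) - S_s(ω^s))`. -/
noncomputable def wealth {X : Type*} {d : ℕ}
    (S : ∀ t : ℕ, (Fin t → X) → EuclideanSpace ℝ (Fin d))
    (φ : ∀ t : ℕ, (Fin t → X) → EuclideanSpace ℝ (Fin d))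
    (x : ℝ) (t : ℕ) (ω : Fin t → X) : ℝ :=
  x + ∑ s : Fin t,
    (inner ℝ (φ s (restr (Nat.le_of_lt s.isLt) ω))
      (S (s + 1) (restr s.isLt ω) - S s (restr (Nat.le_of_lt s.isLt) ω)) : ℝ)

lemma measurable_restr {X : Type*} [MeasurableSpace X] {s t : ℕ} (h : s ≤ t) :
    Measurable (restr (X := X) h) :=
  measurable_pi_lambda _ fun i => measurable_pi_apply _

lemma restr_restr {X : Type*} {a b c : ℕ} (h1 : a ≤ b) (h2 : b ≤ c) (ω : Fin c → X) :
    restr h1 (restr h2 ω) = restr (h1.trans h2) ω := rfl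

lemma measurable_wealth {X : Type*} [MeasurableSpace X] {d : ℕ}
    (S φ : ∀ t : ℕ, (Fin t → X) → EuclideanSpace ℝ (Fin d))
    (hS : ∀ t, Measurable (S t)) (hφ : ∀ t, Measurable (φ t)) (x : ℝ) (t : ℕ) :
    Measurable (wealth S φ x t) := by
  unfold wealth
  refine measurable_const.add (Finset.measurable_sum _ fun s _ => ?_)
  exact Measurable.inner ((hφ s).comp (measurable_restr _))
    (((hS _).comp (measurable_restr _)).sub ((hS _).comp (measurable_restr _)))

noncomputable def inc {X : Type*} {d : ℕ}
    (S φ : ∀ t : ℕ, (Fin t → X) → EuclideanSpace ℝ (Fin d))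
    (T : ℕ) (ω : Fin T → X) (s : ℕ) : ℝ :=
  if h : s < T then
    (inner ℝ (φ s (restr (Nat.le_of_lt h) ω))
      (S (s + 1) (restr h ω) - S s (restr (Nat.le_of_lt h) ω)) : ℝ)
  else 0

lemma wealth_eq {X : Type*} {d : ℕ}
    (S φ : ∀ t : ℕ, (Fin t → X) → EuclideanSpace ℝ (Fin d))
    (x : ℝ) (t : ℕ) (ω : Fin t → X) :
    wealth S φ x t ω = x + ∑ s ∈ Finset.range t, inc S φ t ω s := by
  unfold wealth
  rw [← Fin.sum_univ_eq_sum_range (fun s => inc S φ t ω s)]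
  congr 1
  refine Finset.sum_congr rfl fun s _ => ?_
  rw [inc, dif_pos s.isLt]

lemma inc_restr {X : Type*} {d : ℕ}
    (S φ : ∀ t : ℕ, (Fin t → X) → EuclideanSpace ℝ (Fin d))
    {t T : ℕ} (hst : t ≤ T) (ω : Fin T → X) {s : ℕ} (hs : s < t) :
    inc S φ t (restr hst ω) s = inc S φ T ω s := by
  rw [inc, inc, dif_pos hs, dif_pos (hs.trans_le hst)]; rfl

lemma wealth_decomp {X : Type*} {d : ℕ}
    (S φ : ∀ t : ℕ, (Fin t → X) → EuclideanSpace ℝ (Fin d))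
    (x : ℝ) {t T : ℕ} (hst : t ≤ T) (ω : Fin T → X) :
    wealth S φ x T ω
      = wealth S φ x t (restr hst ω) + ∑ s ∈ Finset.Ico t T, inc S φ T ω s := by
  rw [wealth_eq, wealth_eq]
  have h1 : ∑ s ∈ Finset.range t, inc S φ t (restr hst ω) s
      = ∑ s ∈ Finset.range t, inc S φ T ω s :=
    Finset.sum_congr rfl fun s hs => inc_restr S φ hst ω (Finset.mem_range.mp hs)
  rw [h1, Finset.range_eq_Ico,
    ← Finset.sum_Ico_consecutive _ (Nat.zero_le t) hst]
  rw [Finset.range_eq_Ico]; ring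

noncomputable def strat {X : Type*} {d : ℕ}
    (S φ : ∀ t : ℕ, (Fin t → X) → EuclideanSpace ℝ (Fin d))
    (x : ℝ) (t : ℕ) : ∀ s : ℕ, (Fin s → X) → EuclideanSpace ℝ (Fin d) :=
  fun s ω => if h : t ≤ s then
    (if wealth S φ x t (restr h ω) < 0 then φ s ω else 0) else 0

lemma measurable_strat {X : Type*} [MeasurableSpace X] {d : ℕ}
    (S φ : ∀ t : ℕ, (Fin t → X) → EuclideanSpace ℝ (Fin d))
    (hS : ∀ t, Measurable (S t)) (hφ : ∀ t, Measurable (φ t)) (x : ℝ) (t : ℕ) :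
    ∀ s, Measurable (strat S φ x t s) := by
  intro s
  unfold strat
  by_cases h : t ≤ s
  · simp only [dif_pos h]
    exact Measurable.ite
      (measurableSet_lt ((measurable_wealth S φ hS hφ x t).comp (measurable_restr h))
        measurable_const) (hφ s) measurable_const
  · simp only [dif_neg h]; exact measurable_const

lemma wealth_strat {X : Type*} {d : ℕ}
    (S φ : ∀ t : ℕ, (Fin t → X) → EuclideanSpace ℝ (Fin d))
    (x : ℝ) {t T : ℕ} (hst : t ≤ T) (ω : Fin T → X) :
    wealth S (strat S φ x t) 0 T ω
      = if wealth S φ x t (restr hst ω) < 0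
        then wealth S φ x T ω - wealth S φ x t (restr hst ω) else 0 := by
  rw [wealth_eq, zero_add, Finset.range_eq_Ico,
    ← Finset.sum_Ico_consecutive _ (Nat.zero_le t) hst]
  have h0 : ∀ s ∈ Finset.Ico 0 t, inc S (strat S φ x t) T ω s = 0 := by
    intro s hs
    obtain ⟨-, hs⟩ := Finset.mem_Ico.mp hs
    rw [inc, dif_pos (hs.trans_le hst)]
    unfold strat; rw [dif_neg (Nat.not_le.mpr hs)]
    simp
  have h1 : ∀ s ∈ Finset.Ico t T, inc S (strat S φ x t) T ω s
      = if wealth S φ x t (restr hst ω) < 0 then inc S φ T ω s else 0 := by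
    intro s hs
    obtain ⟨hts, hsT⟩ := Finset.mem_Ico.mp hs
    rw [inc, inc, dif_pos hsT, dif_pos hsT]; unfold strat; rw [dif_pos hts]
    have hres : restr hts (restr (Nat.le_of_lt hsT) ω) = restr hst ω := rfl
    rw [hres]
    split_ifs with h
    · rfl
    · simp
  rw [Finset.sum_congr rfl h0, Finset.sum_congr rfl h1, Finset.sum_const_zero, zero_add]
  split_ifs with h
  · rw [wealth_decomp S φ x hst ω]; ring
  · exact Finset.sum_const_zero

/-- under the multiple-priors no-arbitrage condition `NA(𝒬^T)`, any
strategy whose terminal wealth from initial capital `x ≥ 0` is non-negative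
`𝒬^T`-quasi-surely has non-negative wealth `𝒬^t`-quasi-surely at every
intermediate time `t ≤ T`. -/
theorem intertemporal_nonneg_wealth
    {X : Type*} [MeasurableSpace X] {d T : ℕ}
    (S : ∀ t : ℕ, (Fin t → X) → EuclideanSpace ℝ (Fin d))
    (hS : ∀ t, Measurable (S t))
    (𝒬 : ∀ t : ℕ, Set (Measure (Fin t → X)))
    (h𝒬ne : ∀ t ≤ T, (𝒬 t).Nonempty)
    (h𝒬prob : ∀ t, ∀ P ∈ 𝒬 t, IsProbabilityMeasure P)
    -- any prior at time `s` extends to a prior at a later time `t` (concatenation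
    -- with universally measurable selectors of the one-step prior sets)
    (hext : ∀ s t : ℕ, ∀ hst : s ≤ t, ∀ P ∈ 𝒬 s, ∃ P' ∈ 𝒬 t,
      Measure.map (restr hst) P' = P)
    -- the no-arbitrage condition NA(𝒬^T)
    (hNA : ∀ ψ : ∀ t : ℕ, (Fin t → X) → EuclideanSpace ℝ (Fin d),
      (∀ t, Measurable (ψ t)) →
      (∀ P ∈ 𝒬 T, P {ω | 0 ≤ wealth S ψ 0 T ω} = 1) →
      (∀ P ∈ 𝒬 T, P {ω | wealth S ψ 0 T ω = 0} = 1))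
    (φ : ∀ t : ℕ, (Fin t → X) → EuclideanSpace ℝ (Fin d))
    (hφ : ∀ t, Measurable (φ t))
    (x : ℝ) (hx : 0 ≤ x)
    (hterm : ∀ P ∈ 𝒬 T, P {ω | 0 ≤ wealth S φ x T ω} = 1) :
    ∀ t ≤ T, ∀ P ∈ 𝒬 t, P {ω | 0 ≤ wealth S φ x t ω} = 1 := by
  intro t ht P hP
  by_contra hne
  haveI hPprob := h𝒬prob t P hP
  have hsm := measurable_strat S φ hS hφ x t
  -- (strat S φ x t) has q.s. nonnegative terminal wealth
  have hsnn : ∀ P' ∈ 𝒬 T, P' {ω | 0 ≤ wealth S (strat S φ x t) 0 T ω} = 1 := by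
    intro P' hP'
    haveI := h𝒬prob T P' hP'
    have hsub : {ω | 0 ≤ wealth S φ x T ω} ⊆ {ω | 0 ≤ wealth S (strat S φ x t) 0 T ω} := by
      intro ω hω
      simp only [mem_setOf_eq] at *
      rw [wealth_strat S φ x ht ω]
      split_ifs with h
      · linarith
      · exact le_refl 0
    exact le_antisymm prob_le_one ((hterm P' hP').symm.trans_le (measure_mono hsub))
  obtain ⟨P', hP', hmap⟩ := hext t T ht P hP
  haveI := h𝒬prob T P' hP'
  have hz := hNA (strat S φ x t) hsm hsnn P' hP'
  have hnn := hterm P' hP'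
  -- measurable sets
  have hAm : MeasurableSet {ω : Fin t → X | 0 ≤ wealth S φ x t ω} :=
    measurableSet_le measurable_const (measurable_wealth S φ hS hφ x t)
  have hBm : MeasurableSet {ω : Fin T → X | wealth S (strat S φ x t) 0 T ω = 0} :=
    measurableSet_eq_fun (measurable_wealth S (strat S φ x t) hS hsm 0 T) measurable_const
  have hCm : MeasurableSet {ω : Fin T → X | 0 ≤ wealth S φ x T ω} :=
    measurableSet_le measurable_const (measurable_wealth S φ hS hφ x T)
  -- the bad set has positive probability under P'
  have hpos : 0 < P' (restr ht ⁻¹' {ω : Fin t → X | 0 ≤ wealth S φ x t ω}ᶜ) := by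
    have : P' (restr ht ⁻¹' {ω : Fin t → X | 0 ≤ wealth S φ x t ω}ᶜ)
        = P {ω : Fin t → X | 0 ≤ wealth S φ x t ω}ᶜ := by
      rw [← hmap, Measure.map_apply (measurable_restr ht) hAm.compl]
    rw [this, measure_compl hAm (measure_ne_top P _)]
    simp only [measure_univ]
    exact tsub_pos_iff_lt.mpr (lt_of_le_of_ne prob_le_one hne)
  -- intersect with the two full-measure sets
  set N := {ω : Fin T → X | wealth S (strat S φ x t) 0 T ω = 0}ᶜ ∪ {ω : Fin T → X | 0 ≤ wealth S φ x T ω}ᶜ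
    with hN
  have hNnull : P' N = 0 := by
    apply measure_union_null
    · rw [prob_compl_eq_zero_iff hBm]; exact hz
    · rw [prob_compl_eq_zero_iff hCm]; exact hnn
  have hDpos : 0 < P' ((restr ht ⁻¹' {ω : Fin t → X | 0 ≤ wealth S φ x t ω}ᶜ) \ N) := by
    rwa [measure_diff_null hNnull]
  obtain ⟨ω, hω⟩ := nonempty_of_measure_ne_zero hDpos.ne'
  obtain ⟨hω1, hω2⟩ := hω
  simp only [hN, mem_union, mem_compl_iff, mem_setOf_eq, not_or, not_not] at hω2
  obtain ⟨hωB, hωC⟩ := hω2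
  simp only [mem_preimage, mem_compl_iff, mem_setOf_eq, not_le] at hω1
  rw [wealth_strat S φ x ht ω, if_pos hω1] at hωB
  linarith
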